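/- arXiv:2406.04192 — 5 statements merged into one kernel-verified Lean document; each statement's English description precedes it below -/
import Mathlib

section
/- Let N ≥ 1, let F_1, …, F_N : ℝ^d → ℝ be functions, let E ⊆ {1,…,N}² be a graph, and let E' ⊆ {1,…,N}² be any graph satisfying (a) E ⊆ E' and (b) for all i, j, if Vor_i^E(F) ∩ Vor_j^E(F) ≠ ∅ then (i,j) ∈ E'. Then the cells associated to E' are exactly the Voronoi cells: for every i, Vor_i^{E'}(F) = Vor_i(F). -/
/-- The generalized Voronoi cell of index `i` for functions `F`. -/
def Vor {d N : ℕ} (F : Fin N → EuclideanSpace ℝ (Fin d) → ℝ) (i : Fin N) :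
    Set (EuclideanSpace ℝ (Fin d)) :=
  {x | ∀ j, j ≠ i → F i x ≤ F j x}

/-- The cell of index `i` associated to a graph `E` of oriented edges. -/
def VorE {d N : ℕ} (F : Fin N → EuclideanSpace ℝ (Fin d) → ℝ)
    (E : Set (Fin N × Fin N)) (i : Fin N) : Set (EuclideanSpace ℝ (Fin d)) :=
  ⋂ j ∈ {j : Fin N | (i, j) ∈ E}, {x | F i x ≤ F j x}

/-- if `E'` contains `E` together with every pair `(i,j)` whose
cells relative to `E` intersect, then the cells relative to `E'` are exactly
the Voronoi cells. -/
theorem graph_cells_eq_voronoi {d N : ℕ} (hN : 1 ≤ N)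
    (F : Fin N → EuclideanSpace ℝ (Fin d) → ℝ)
    (E E' : Set (Fin N × Fin N))
    (hEE' : E ⊆ E')
    (hE' : ∀ i j : Fin N, (VorE F E i ∩ VorE F E j).Nonempty → (i, j) ∈ E')
    (i : Fin N) :
    VorE F E' i = Vor F i := by
  ext x
  simp only [VorE, Vor, Set.mem_iInter, Set.mem_setOf_eq]
  constructor
  · intro hx j _
    -- pick k minimizing F · x
    have : Nonempty (Fin N) := ⟨⟨0, hN⟩⟩
    obtain ⟨k, _, hk⟩ := Finset.exists_min_image Finset.univ (fun k => F k x)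
      ⟨Classical.arbitrary (Fin N), Finset.mem_univ _⟩
    have hxk : x ∈ VorE F E k := by
      simp only [VorE, Set.mem_iInter, Set.mem_setOf_eq]
      intro m _
      exact hk m (Finset.mem_univ m)
    have hxi : x ∈ VorE F E i := by
      simp only [VorE, Set.mem_iInter, Set.mem_setOf_eq]
      intro m hm
      exact hx m (hEE' hm)
    have hik : (i, k) ∈ E' := hE' i k ⟨x, hxi, hxk⟩
    exact le_trans (hx k hik) (hk j (Finset.mem_univ j))
  · intro hx j hj
    by_cases h : j = i
    · simp [h]
    · exact hx j h
end

section
/- Let μ be a finite, compactly supported measure on ℝ^d that is absolutely continuous with respect to Lebesgue measure, let x_1, …, x_N ∈ ℝ^d (N ≥ 1) be pairwise distinct, and let ν_1, …, ν_N ∈ ℝ. Then the Kantorovich functional satisfies the supergradient inequality: for all ψ, ψ' ∈ ℝ^N, K(ψ') ≤ K(ψ) + Σ_{i=1}^N (ν_i − μ(Lag_i^ψ)) (ψ'_i − ψ_i). -/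
open MeasureTheory

lemma hyperplane_null {d : ℕ} (v : EuclideanSpace ℝ (Fin d)) (hv : v ≠ 0) (c : ℝ) :
    volume {p : EuclideanSpace ℝ (Fin d) | (inner ℝ p v : ℝ) = c} = 0 := by
  set p₀ : EuclideanSpace ℝ (Fin d) := (c / ‖v‖ ^ 2) • v with hp₀
  have hv2 : ‖v‖ ^ 2 ≠ 0 := pow_ne_zero 2 (norm_ne_zero_iff.mpr hv)
  have hfp₀ : (inner ℝ p₀ v : ℝ) = c := by
    rw [hp₀, real_inner_smul_left, real_inner_self_eq_norm_sq]
    field_simp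
  set S : AffineSubspace ℝ (EuclideanSpace ℝ (Fin d)) :=
    AffineSubspace.mk' p₀ (LinearMap.ker (innerSL ℝ v : EuclideanSpace ℝ (Fin d) →ₗ[ℝ] ℝ)) with hS
  have hset : {p : EuclideanSpace ℝ (Fin d) | (inner ℝ p v : ℝ) = c} = (S : Set _) := by
    ext p
    simp only [Set.mem_setOf_eq, hS, AffineSubspace.mem_coe,
      AffineSubspace.mem_mk', LinearMap.mem_ker, ContinuousLinearMap.coe_coe, innerSL_apply_apply, vsub_eq_sub,
      inner_sub_right]
    constructor
    · intro h; linarith [real_inner_comm p v, real_inner_comm p₀ v, hfp₀, h]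
    · intro h; linarith [real_inner_comm p v, real_inner_comm p₀ v, hfp₀, h]
  rw [hset]
  apply Measure.addHaar_affineSubspace
  intro htop
  have hmem : p₀ + v ∈ S := htop ▸ AffineSubspace.mem_top ℝ _ _
  rw [hS, AffineSubspace.mem_mk'] at hmem
  simp only [vsub_eq_sub, add_sub_cancel_left, LinearMap.mem_ker, ContinuousLinearMap.coe_coe, innerSL_apply_apply] at hmem
  exact hv2 (by rwa [real_inner_self_eq_norm_sq] at hmem)

/-- The Laguerre cell of index `i` for sites `x` and weights `ψ`. -/
def Lag {d N : ℕ} (x : Fin N → EuclideanSpace ℝ (Fin d)) (ψ : Fin N → ℝ) (i : Fin N) :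
    Set (EuclideanSpace ℝ (Fin d)) :=
  {p | ∀ j, j ≠ i → ‖p - x i‖ ^ 2 - ψ i ≤ ‖p - x j‖ ^ 2 - ψ j}

/-- The semi-discrete Kantorovich dual functional. -/
noncomputable def Kfun {d N : ℕ} (μ : Measure (EuclideanSpace ℝ (Fin d)))
    (x : Fin N → EuclideanSpace ℝ (Fin d)) (ν : Fin N → ℝ) (ψ : Fin N → ℝ) : ℝ :=
  (∫ p, (⨅ i : Fin N, (‖p - x i‖ ^ 2 - ψ i)) ∂μ) + ∑ i : Fin N, ψ i * ν i

/-- the supergradient inequality for the Kantorovich functional,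
with supergradient `(ν_i − μ(Lag_i^ψ))_i`. -/
theorem kantorovich_supergradient {d N : ℕ} (hN : 1 ≤ N)
    (μ : Measure (EuclideanSpace ℝ (Fin d))) [IsFiniteMeasure μ]
    (hsupp : ∃ K : Set (EuclideanSpace ℝ (Fin d)), IsCompact K ∧ μ Kᶜ = 0)
    (hac : μ ≪ volume)
    (x : Fin N → EuclideanSpace ℝ (Fin d)) (hx : Function.Injective x)
    (ν : Fin N → ℝ) (ψ ψ' : Fin N → ℝ) :
    Kfun μ x ν ψ' ≤ Kfun μ x ν ψ +
      ∑ i : Fin N, (ν i - (μ (Lag x ψ i)).toReal) * (ψ' i - ψ i) := by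
  classical
  haveI : Nonempty (Fin N) := Fin.pos_iff_nonempty.mp hN
  obtain ⟨K, hKc, hKμ⟩ := hsupp
  -- continuity of the pieces
  have hfc : ∀ (φ : Fin N → ℝ) (i : Fin N),
      Continuous (fun p : EuclideanSpace ℝ (Fin d) => ‖p - x i‖ ^ 2 - φ i) :=
    fun φ i => (((continuous_id.sub continuous_const).norm.pow 2).sub continuous_const)
  have hFc : ∀ (φ : Fin N → ℝ),
      Continuous (fun p : EuclideanSpace ℝ (Fin d) => ⨅ i, (‖p - x i‖ ^ 2 - φ i)) := by
    intro φ
    have heq : (fun p : EuclideanSpace ℝ (Fin d) => ⨅ i, (‖p - x i‖ ^ 2 - φ i)) =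
        fun p => Finset.univ.inf' Finset.univ_nonempty (fun i => ‖p - x i‖ ^ 2 - φ i) := by
      funext p; rw [Finset.inf'_univ_eq_ciInf]
    rw [heq]
    exact Continuous.finset_inf'_apply Finset.univ_nonempty (fun i _ => hfc φ i)
  have hK' : ∀ᵐ p ∂μ, p ∈ K := mem_ae_iff.mpr hKμ
  have hint : ∀ (φ : Fin N → ℝ),
      Integrable (fun p : EuclideanSpace ℝ (Fin d) => ⨅ i, (‖p - x i‖ ^ 2 - φ i)) μ := by
    intro φ
    obtain ⟨C, hC⟩ := hKc.exists_bound_of_continuousOn (hFc φ).continuousOn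
    refine Integrable.mono' (integrable_const C) (hFc φ).aestronglyMeasurable ?_
    filter_upwards [hK'] with p hp using hC p hp
  -- measurability of Laguerre cells
  have hLagMeas : ∀ i, MeasurableSet (Lag x ψ i) := by
    intro i
    have heq : Lag x ψ i = ⋂ j, ⋂ _ : j ≠ i,
        {p : EuclideanSpace ℝ (Fin d) | ‖p - x i‖ ^ 2 - ψ i ≤ ‖p - x j‖ ^ 2 - ψ j} := by
      ext p; simp [Lag]
    rw [heq]
    exact MeasurableSet.iInter fun j => MeasurableSet.iInter fun hj =>
      (isClosed_le (hfc ψ i) (hfc ψ j)).measurableSet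
  -- pairwise null intersections
  have hnull : ∀ i j, i ≠ j → μ (Lag x ψ i ∩ Lag x ψ j) = 0 := by
    intro i j hij
    apply hac
    have hvne : (2 : ℝ) • (x j - x i) ≠ 0 :=
      smul_ne_zero two_ne_zero (sub_ne_zero.mpr (fun h => hij (hx h).symm))
    refine measure_mono_null (fun p hp => ?_)
      (hyperplane_null ((2 : ℝ) • (x j - x i)) hvne (‖x j‖ ^ 2 - ‖x i‖ ^ 2 + ψ i - ψ j))
    obtain ⟨hpi, hpj⟩ := hp
    have h1 := hpi j (Ne.symm hij)
    have h2 := hpj i hij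
    have heq : ‖p - x i‖ ^ 2 - ψ i = ‖p - x j‖ ^ 2 - ψ j := le_antisymm h1 h2
    have e1 : ‖p - x i‖ ^ 2 = ‖p‖ ^ 2 - 2 * inner ℝ p (x i) + ‖x i‖ ^ 2 := norm_sub_sq_real p (x i)
    have e2 : ‖p - x j‖ ^ 2 = ‖p‖ ^ 2 - 2 * inner ℝ p (x j) + ‖x j‖ ^ 2 := norm_sub_sq_real p (x j)
    show (inner ℝ p ((2:ℝ) • (x j - x i)) : ℝ) = ‖x j‖ ^ 2 - ‖x i‖ ^ 2 + ψ i - ψ j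
    rw [real_inner_smul_right, inner_sub_right]
    linarith
  -- the disjointified cells
  set A : Fin N → Set (EuclideanSpace ℝ (Fin d)) :=
    fun i => Lag x ψ i \ ⋃ j, ⋃ _ : j < i, Lag x ψ j with hA
  have hAmeas : ∀ i, MeasurableSet (A i) :=
    fun i => (hLagMeas i).diff (MeasurableSet.iUnion fun j =>
      MeasurableSet.iUnion fun _ => hLagMeas j)
  have hAμ : ∀ i, μ (A i) = μ (Lag x ψ i) := by
    intro i
    have hinter : μ (Lag x ψ i ∩ ⋃ j, ⋃ _ : j < i, Lag x ψ j) = 0 := by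
      refine measure_mono_null (fun p hp => ?_)
        (measure_iUnion_null (fun j => measure_iUnion_null (fun hj =>
          hnull i j (Ne.symm (ne_of_lt hj)))))
      obtain ⟨hpi, hpu⟩ := hp
      simp only [Set.mem_iUnion] at hpu ⊢
      obtain ⟨j, hj, hpj⟩ := hpu
      exact ⟨j, hj, hpi, hpj⟩
    have : A i = Lag x ψ i \ (Lag x ψ i ∩ ⋃ j, ⋃ _ : j < i, Lag x ψ j) := by
      rw [hA]; ext p; simp only [Set.mem_diff, Set.mem_inter_iff]; tauto
    rw [this, measure_diff_null hinter]
  -- every point is in some cell, and in exactly one A i for the minimal index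
  have hsel : ∀ p : EuclideanSpace ℝ (Fin d), ∃ i, p ∈ A i := by
    intro p
    have hex : ∃ i, p ∈ Lag x ψ i := by
      obtain ⟨i, -, hi⟩ := Finset.exists_min_image Finset.univ
        (fun i => ‖p - x i‖ ^ 2 - ψ i) Finset.univ_nonempty
      exact ⟨i, fun j _ => hi j (Finset.mem_univ j)⟩
    set S : Finset (Fin N) := Finset.univ.filter (fun i => p ∈ Lag x ψ i) with hSdef
    have hSne : S.Nonempty := by
      obtain ⟨i, hi⟩ := hex
      exact ⟨i, by simp [hSdef, hi]⟩
    refine ⟨S.min' hSne, ?_, ?_⟩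
    · have := S.min'_mem hSne
      simp only [hSdef, Finset.mem_filter] at this
      exact this.2
    · intro hmem
      simp only [Set.mem_iUnion] at hmem
      obtain ⟨j, hj, hpj⟩ := hmem
      have : S.min' hSne ≤ j := S.min'_le j (by simp [hSdef, hpj])
      exact absurd this (not_le.mpr hj)
  -- pointwise bound
  have hpt : ∀ p : EuclideanSpace ℝ (Fin d),
      (⨅ i, (‖p - x i‖ ^ 2 - ψ' i)) ≤ (⨅ i, (‖p - x i‖ ^ 2 - ψ i)) +
        ∑ i, Set.indicator (A i) (fun _ => ψ i - ψ' i) p := by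
    intro p
    obtain ⟨i₀, hpA⟩ := hsel p
    have hpL : p ∈ Lag x ψ i₀ := hpA.1
    have h1 : (⨅ i, (‖p - x i‖ ^ 2 - ψ' i)) ≤ ‖p - x i₀‖ ^ 2 - ψ' i₀ :=
      ciInf_le (Set.Finite.bddBelow (Set.finite_range _)) i₀
    have h2 : ‖p - x i₀‖ ^ 2 - ψ i₀ ≤ ⨅ i, (‖p - x i‖ ^ 2 - ψ i) := by
      refine le_ciInf fun j => ?_
      by_cases hj : j = i₀
      · rw [hj]
      · exact hpL j hj
    have h3 : ∑ i, Set.indicator (A i) (fun _ => ψ i - ψ' i) p = ψ i₀ - ψ' i₀ := by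
      rw [Finset.sum_eq_single i₀]
      · rw [Set.indicator_of_mem hpA]
      · intro j _ hj
        apply Set.indicator_of_notMem
        intro hpAj
        rcases lt_or_gt_of_ne hj with hlt | hgt
        · exact hpA.2 (Set.mem_iUnion.mpr ⟨j, Set.mem_iUnion.mpr ⟨hlt, hpAj.1⟩⟩)
        · exact hpAj.2 (Set.mem_iUnion.mpr ⟨i₀, Set.mem_iUnion.mpr ⟨hgt, hpL⟩⟩)
      · intro h; exact absurd (Finset.mem_univ i₀) h
    rw [h3]
    linarith
  -- integrability of the indicator sum
  have hintg : Integrable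
      (fun p => ∑ i, Set.indicator (A i) (fun _ => ψ i - ψ' i) p) μ :=
    integrable_finset_sum _ fun i _ => (integrable_const _).indicator (hAmeas i)
  have key : ∫ p, (⨅ i, (‖p - x i‖ ^ 2 - ψ' i)) ∂μ ≤
      ∫ p, (⨅ i, (‖p - x i‖ ^ 2 - ψ i)) ∂μ +
        ∑ i, (ψ i - ψ' i) * (μ (Lag x ψ i)).toReal := by
    have step1 : ∫ p, (⨅ i, (‖p - x i‖ ^ 2 - ψ' i)) ∂μ ≤
        ∫ p, ((⨅ i, (‖p - x i‖ ^ 2 - ψ i)) +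
          ∑ i, Set.indicator (A i) (fun _ => ψ i - ψ' i) p) ∂μ :=
      integral_mono (hint ψ') ((hint ψ).add hintg) hpt
    rw [integral_add (hint ψ) hintg] at step1
    have step2 : ∫ p, (∑ i, Set.indicator (A i) (fun _ => ψ i - ψ' i) p) ∂μ =
        ∑ i, (ψ i - ψ' i) * (μ (Lag x ψ i)).toReal := by
      rw [integral_finset_sum _ (fun i _ => (integrable_const _).indicator (hAmeas i))]
      refine Finset.sum_congr rfl fun i _ => ?_
      rw [integral_indicator_const _ (hAmeas i), measureReal_def, hAμ i, smul_eq_mul, mul_comm]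
    rw [step2] at step1
    exact step1
  -- conclude
  rw [Kfun, Kfun]
  have halg : ∑ i, ψ' i * ν i + ∑ i, (ψ i - ψ' i) * (μ (Lag x ψ i)).toReal =
      ∑ i, ψ i * ν i + ∑ i, (ν i - (μ (Lag x ψ i)).toReal) * (ψ' i - ψ i) := by
    rw [← Finset.sum_add_distrib, ← Finset.sum_add_distrib]
    exact Finset.sum_congr rfl fun i _ => by ring
  linarith
end

section
/- Let μ be a finite, compactly supported measure on ℝ^d that is absolutely continuous with respect to Lebesgue measure, let x_1, …, x_N ∈ ℝ^d (N ≥ 1) be pairwise distinct, and let ν_1, …, ν_N ∈ ℝ. Then the Kantorovich functional K is differentiable at every ψ ∈ ℝ^N with partial derivatives ∂K/∂ψ_i (ψ) = ν_i − μ(Lag_i^ψ) for each i; i.e. K has at ψ the (total Fréchet) derivative given by the linear map h ↦ Σ_{i=1}^N (ν_i − μ(Lag_i^ψ)) h_i. -/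
open MeasureTheory Filter Asymptotics Topology

section helpers
variable {d N : ℕ}

private lemma exists_min_iInf [Nonempty (Fin N)] (g : Fin N → ℝ) :
    ∃ i, (⨅ j, g j) = g i ∧ ∀ j, g i ≤ g j := by
  obtain ⟨i, hi⟩ := Finite.exists_min g
  exact ⟨i, le_antisymm (ciInf_le (Finite.bddBelow_range g) i) (le_ciInf hi), hi⟩

noncomputable def fE (x : Fin N → EuclideanSpace ℝ (Fin d)) (φ : Fin N → ℝ)
    (p : EuclideanSpace ℝ (Fin d)) : ℝ := ⨅ i, (‖p - x i‖ ^ 2 - φ i)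

private lemma fE_le [Nonempty (Fin N)] (x : Fin N → EuclideanSpace ℝ (Fin d))
    (φ χ : Fin N → ℝ) (p : EuclideanSpace ℝ (Fin d)) :
    fE x φ p ≤ fE x χ p + ‖φ - χ‖ := by
  obtain ⟨i, hi, -⟩ := exists_min_iInf (fun j => ‖p - x j‖ ^ 2 - χ j)
  have h1 : fE x φ p ≤ ‖p - x i‖ ^ 2 - φ i := ciInf_le (Finite.bddBelow_range _) i
  have h2 : |(φ - χ) i| ≤ ‖φ - χ‖ := norm_le_pi_norm (φ - χ) i
  have h3 : χ i - φ i ≤ ‖φ - χ‖ := by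
    have := neg_abs_le ((φ - χ) i); simp only [Pi.sub_apply] at this h2; linarith [abs_nonneg ((φ-χ) i)]
  have : fE x χ p = ‖p - x i‖ ^ 2 - χ i := hi
  linarith

private lemma abs_fE_sub [Nonempty (Fin N)] (x : Fin N → EuclideanSpace ℝ (Fin d))
    (φ χ : Fin N → ℝ) (p : EuclideanSpace ℝ (Fin d)) :
    |fE x φ p - fE x χ p| ≤ ‖φ - χ‖ := by
  have h1 := fE_le x φ χ p
  have h2 := fE_le x χ φ p
  rw [abs_sub_le_iff]
  constructor
  · linarith
  · rw [show χ - φ = -(φ - χ) by ring, norm_neg] at h2; linarith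

private lemma fE_cont [Nonempty (Fin N)] (x : Fin N → EuclideanSpace ℝ (Fin d))
    (φ : Fin N → ℝ) : Continuous (fE x φ) := by
  have : fE x φ = fun p => Finset.univ.inf' Finset.univ_nonempty
      (fun i => ‖p - x i‖ ^ 2 - φ i) := by
    funext p
    exact (Finset.inf'_univ_eq_ciInf _).symm
  rw [this]
  apply Continuous.finset_inf'_apply Finset.univ_nonempty
  intro i _
  exact ((continuous_norm.comp (continuous_id.sub continuous_const)).pow 2).sub continuous_const

end helpers

section helpers2
variable {d N : ℕ}

private lemma fE_integrable [Nonempty (Fin N)] (μ : Measure (EuclideanSpace ℝ (Fin d)))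
    [IsFiniteMeasure μ]
    (hsupp : ∃ K : Set (EuclideanSpace ℝ (Fin d)), IsCompact K ∧ μ Kᶜ = 0)
    (x : Fin N → EuclideanSpace ℝ (Fin d)) (φ : Fin N → ℝ) :
    Integrable (fE x φ) μ := by
  obtain ⟨K, hK, hKc⟩ := hsupp
  obtain ⟨C, hC⟩ := hK.exists_bound_of_continuousOn (fE_cont x φ).continuousOn
  refine Integrable.mono' (integrable_const C) (fE_cont x φ).aestronglyMeasurable ?_
  rw [ae_iff]
  refine measure_mono_null (fun p hp => ?_) hKc
  simp only [Set.mem_setOf_eq, not_le] at hp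
  intro hpK
  exact absurd (hC p hpK) (not_le.mpr hp)

private lemma Lag_meas (x : Fin N → EuclideanSpace ℝ (Fin d)) (ψ : Fin N → ℝ) (i : Fin N) :
    MeasurableSet (Lag x ψ i) := by
  have : Lag x ψ i = ⋂ j, ⋂ (_ : j ≠ i),
      {p : EuclideanSpace ℝ (Fin d) | ‖p - x i‖ ^ 2 - ψ i ≤ ‖p - x j‖ ^ 2 - ψ j} := by
    ext p; simp [Lag, Set.mem_iInter]
  rw [this]
  refine MeasurableSet.iInter fun j => MeasurableSet.iInter fun _ => ?_
  have hcont : ∀ k : Fin N, Continuous fun p : EuclideanSpace ℝ (Fin d) =>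
      ‖p - x k‖ ^ 2 - ψ k := fun k =>
    ((continuous_norm.comp (continuous_id.sub continuous_const)).pow 2).sub continuous_const
  exact (isClosed_le (hcont i) (hcont j)).measurableSet

/-- tie set: hyperplane, volume zero -/
private lemma tie_null (x : Fin N → EuclideanSpace ℝ (Fin d)) (ψ : Fin N → ℝ)
    {i j : Fin N} (hij : x i ≠ x j) :
    volume {p : EuclideanSpace ℝ (Fin d) |
      ‖p - x i‖ ^ 2 - ψ i = ‖p - x j‖ ^ 2 - ψ j} = 0 := by
  set T := {p : EuclideanSpace ℝ (Fin d) |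
      ‖p - x i‖ ^ 2 - ψ i = ‖p - x j‖ ^ 2 - ψ j} with hT
  rcases T.eq_empty_or_nonempty with hTe | ⟨p₀, hp₀⟩
  · rw [hTe]; exact measure_empty
  set v : EuclideanSpace ℝ (Fin d) := x j - x i with hv
  have hv0 : v ≠ 0 := sub_ne_zero.mpr (Ne.symm hij)
  have key : ∀ p ∈ T, ∀ q ∈ T, (inner ℝ v (p - q) : ℝ) = 0 := by
    intro p hp q hq
    simp only [hT, Set.mem_setOf_eq] at hp hq
    have e1 : ‖p - x i‖ ^ 2 = ‖p‖ ^ 2 - 2 * inner ℝ p (x i) + ‖x i‖ ^ 2 := norm_sub_sq_real p (x i)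
    have e2 : ‖p - x j‖ ^ 2 = ‖p‖ ^ 2 - 2 * inner ℝ p (x j) + ‖x j‖ ^ 2 := norm_sub_sq_real p (x j)
    have e3 : ‖q - x i‖ ^ 2 = ‖q‖ ^ 2 - 2 * inner ℝ q (x i) + ‖x i‖ ^ 2 := norm_sub_sq_real q (x i)
    have e4 : ‖q - x j‖ ^ 2 = ‖q‖ ^ 2 - 2 * inner ℝ q (x j) + ‖x j‖ ^ 2 := norm_sub_sq_real q (x j)
    have : (inner ℝ v (p - q) : ℝ)
        = inner ℝ p (x j) - inner ℝ p (x i) - (inner ℝ q (x j) - inner ℝ q (x i)) := by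
      rw [hv, inner_sub_right, inner_sub_left, inner_sub_left]
      rw [real_inner_comm (x j) p, real_inner_comm (x i) p,
        real_inner_comm (x j) q, real_inner_comm (x i) q]
    rw [this]; linarith
  -- T is contained in an affine subspace
  set S : AffineSubspace ℝ (EuclideanSpace ℝ (Fin d)) :=
    AffineSubspace.mk' p₀ (LinearMap.ker ((innerSL ℝ v : EuclideanSpace ℝ (Fin d) →ₗ[ℝ] ℝ))) with hS
  have hsub : T ⊆ (S : Set (EuclideanSpace ℝ (Fin d))) := by
    intro p hp
    refine AffineSubspace.mem_mk'.mpr ?_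
    simp only [LinearMap.mem_ker, ContinuousLinearMap.coe_coe, innerSL_apply_apply, vsub_eq_sub]
    exact key p hp p₀ hp₀
  have hSne : S ≠ ⊤ := by
    intro h
    have hd : S.direction = ⊤ := by rw [h]; exact AffineSubspace.direction_top ℝ _ _
    rw [hS, AffineSubspace.direction_mk'] at hd
    have : v ∈ LinearMap.ker ((innerSL ℝ v : EuclideanSpace ℝ (Fin d) →ₗ[ℝ] ℝ)) := by rw [hd]; trivial
    simp only [LinearMap.mem_ker, ContinuousLinearMap.coe_coe, innerSL_apply_apply] at this
    exact hv0 (inner_self_eq_zero.mp this)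
  exact measure_mono_null hsub (Measure.addHaar_affineSubspace volume S hSne)

end helpers2

section helpers3
variable {d N : ℕ}

/-- the "bad" set of ties -/
def Bad (x : Fin N → EuclideanSpace ℝ (Fin d)) (ψ : Fin N → ℝ) :
    Set (EuclideanSpace ℝ (Fin d)) :=
  ⋃ i, ⋃ j, ⋃ (_ : i ≠ j),
    {p : EuclideanSpace ℝ (Fin d) | ‖p - x i‖ ^ 2 - ψ i = ‖p - x j‖ ^ 2 - ψ j}

private lemma Bad_null (μ : Measure (EuclideanSpace ℝ (Fin d))) (hac : μ ≪ volume)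
    (x : Fin N → EuclideanSpace ℝ (Fin d)) (hx : Function.Injective x) (ψ : Fin N → ℝ) :
    μ (Bad x ψ) = 0 := by
  refine hac ?_
  refine measure_iUnion_null fun i => measure_iUnion_null fun j => measure_iUnion_null fun hij => ?_
  exact tie_null x ψ (fun h => hij (hx h))

/-- at a good point the min is attained at a unique, strict index -/
private lemma good_point [Nonempty (Fin N)] {x : Fin N → EuclideanSpace ℝ (Fin d)}
    {ψ : Fin N → ℝ} {p : EuclideanSpace ℝ (Fin d)} (hp : p ∉ Bad x ψ) :
    ∃ i₀ : Fin N, (∀ j, ‖p - x i₀‖ ^ 2 - ψ i₀ ≤ ‖p - x j‖ ^ 2 - ψ j) ∧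
      (∀ j, j ≠ i₀ → ‖p - x i₀‖ ^ 2 - ψ i₀ < ‖p - x j‖ ^ 2 - ψ j) := by
  simp only [Bad, Set.mem_iUnion, Set.mem_setOf_eq, not_exists] at hp
  obtain ⟨i₀, hi₀⟩ := Finite.exists_min (fun j => ‖p - x j‖ ^ 2 - ψ j)
  refine ⟨i₀, hi₀, fun j hj => lt_of_le_of_ne (hi₀ j) ?_⟩
  intro h
  exact hp i₀ j (Ne.symm hj) h

private lemma indicator_sum_eq [Nonempty (Fin N)] {x : Fin N → EuclideanSpace ℝ (Fin d)}
    {ψ : Fin N → ℝ} {p : EuclideanSpace ℝ (Fin d)} {i₀ : Fin N}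
    (hmin : ∀ j, ‖p - x i₀‖ ^ 2 - ψ i₀ ≤ ‖p - x j‖ ^ 2 - ψ j)
    (hstrict : ∀ j, j ≠ i₀ → ‖p - x i₀‖ ^ 2 - ψ i₀ < ‖p - x j‖ ^ 2 - ψ j)
    (h : Fin N → ℝ) :
    ∑ i : Fin N, (Lag x ψ i).indicator (fun _ => h i) p = h i₀ := by
  rw [Finset.sum_eq_single i₀]
  · rw [Set.indicator_of_mem]
    intro j _
    exact hmin j
  · intro j _ hj
    rw [Set.indicator_of_notMem]
    intro hpj
    exact absurd (hpj i₀ (Ne.symm hj)) (not_le.mpr (hstrict j hj))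
  · intro h'; exact absurd (Finset.mem_univ i₀) h'

/-- eventually in h, the perturbed inf is attained at i₀ and the remainder vanishes -/
private lemma eventually_fE [Nonempty (Fin N)] {x : Fin N → EuclideanSpace ℝ (Fin d)}
    {ψ : Fin N → ℝ} {p : EuclideanSpace ℝ (Fin d)} {i₀ : Fin N}
    (hmin : ∀ j, ‖p - x i₀‖ ^ 2 - ψ i₀ ≤ ‖p - x j‖ ^ 2 - ψ j)
    (hstrict : ∀ j, j ≠ i₀ → ‖p - x i₀‖ ^ 2 - ψ i₀ < ‖p - x j‖ ^ 2 - ψ j) :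
    ∀ᶠ h : Fin N → ℝ in 𝓝 0,
      fE x (ψ + h) p - fE x ψ p + h i₀ = 0 := by
  have hall : ∀ᶠ h : Fin N → ℝ in 𝓝 0, ∀ j,
      ‖p - x i₀‖ ^ 2 - (ψ i₀ + h i₀) ≤ ‖p - x j‖ ^ 2 - (ψ j + h j) := by
    rw [eventually_all]
    intro j
    by_cases hj : j = i₀
    · subst hj; exact Eventually.of_forall fun h => le_refl _
    · have hc : Continuous fun h : Fin N → ℝ =>
          (‖p - x j‖ ^ 2 - (ψ j + h j)) - (‖p - x i₀‖ ^ 2 - (ψ i₀ + h i₀)) := by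
        refine (continuous_const.sub (continuous_const.add (continuous_apply j))).sub
          (continuous_const.sub (continuous_const.add (continuous_apply i₀)))
      have hpos : (0:ℝ) < (‖p - x j‖ ^ 2 - (ψ j + (0:Fin N → ℝ) j))
          - (‖p - x i₀‖ ^ 2 - (ψ i₀ + (0:Fin N → ℝ) i₀)) := by
        simp only [Pi.zero_apply, add_zero]
        linarith [hstrict j hj]
      have := (hc.tendsto 0).eventually_const_lt hpos
      filter_upwards [this] with h hh
      linarith
  filter_upwards [hall] with h hh
  have h1 : fE x (ψ + h) p = ‖p - x i₀‖ ^ 2 - (ψ i₀ + h i₀) := by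
    refine le_antisymm (ciInf_le (Finite.bddBelow_range _) i₀) (le_ciInf fun j => ?_)
    exact hh j
  have h2 : fE x ψ p = ‖p - x i₀‖ ^ 2 - ψ i₀ := by
    refine le_antisymm (ciInf_le (Finite.bddBelow_range _) i₀) (le_ciInf fun j => hmin j)
  simp only [fE, Pi.add_apply] at h1 h2 ⊢
  rw [h1, h2]; ring

end helpers3

section helpers4
variable {d N : ℕ}

noncomputable def Rfun (x : Fin N → EuclideanSpace ℝ (Fin d)) (ψ : Fin N → ℝ)
    (h : Fin N → ℝ) (p : EuclideanSpace ℝ (Fin d)) : ℝ :=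
  fE x (ψ + h) p - fE x ψ p + ∑ i : Fin N, (Lag x ψ i).indicator (fun _ => h i) p

private lemma Rfun_meas [Nonempty (Fin N)] (μ : Measure (EuclideanSpace ℝ (Fin d)))
    (x : Fin N → EuclideanSpace ℝ (Fin d)) (ψ h : Fin N → ℝ) :
    AEStronglyMeasurable (Rfun x ψ h) μ :=
  (((fE_cont x (ψ + h)).sub (fE_cont x ψ)).aestronglyMeasurable).add
    (Finset.aestronglyMeasurable_fun_sum _ fun i _ =>
      aestronglyMeasurable_const.indicator (Lag_meas x ψ i))

private lemma Rfun_abs_le [Nonempty (Fin N)] {x : Fin N → EuclideanSpace ℝ (Fin d)}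
    {ψ : Fin N → ℝ} {p : EuclideanSpace ℝ (Fin d)} (hp : p ∉ Bad x ψ) (h : Fin N → ℝ) :
    |Rfun x ψ h p| ≤ 2 * ‖h‖ := by
  obtain ⟨i₀, hmin, hstrict⟩ := good_point hp
  have hsum := indicator_sum_eq hmin hstrict h
  have h2 := abs_fE_sub x (ψ + h) ψ p
  rw [add_sub_cancel_left] at h2
  have h3 : |h i₀| ≤ ‖h‖ := by
    have := norm_le_pi_norm h i₀
    rwa [Real.norm_eq_abs] at this
  have : Rfun x ψ h p = (fE x (ψ + h) p - fE x ψ p) + h i₀ := by rw [Rfun, hsum]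
  rw [this]
  calc |(fE x (ψ + h) p - fE x ψ p) + h i₀|
      ≤ |fE x (ψ + h) p - fE x ψ p| + |h i₀| := abs_add_le _ _
    _ ≤ 2 * ‖h‖ := by linarith

private lemma Rfun_eventually [Nonempty (Fin N)] {x : Fin N → EuclideanSpace ℝ (Fin d)}
    {ψ : Fin N → ℝ} {p : EuclideanSpace ℝ (Fin d)} (hp : p ∉ Bad x ψ) :
    ∀ᶠ h : Fin N → ℝ in 𝓝 0, Rfun x ψ h p = 0 := by
  obtain ⟨i₀, hmin, hstrict⟩ := good_point hp
  filter_upwards [eventually_fE hmin hstrict] with h hh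
  rw [Rfun, indicator_sum_eq hmin hstrict h]
  exact hh

private lemma Rfun_integral [Nonempty (Fin N)] (μ : Measure (EuclideanSpace ℝ (Fin d)))
    [IsFiniteMeasure μ]
    (hsupp : ∃ K : Set (EuclideanSpace ℝ (Fin d)), IsCompact K ∧ μ Kᶜ = 0)
    (x : Fin N → EuclideanSpace ℝ (Fin d)) (ψ h : Fin N → ℝ) :
    ∫ p, Rfun x ψ h p ∂μ = (∫ p, fE x (ψ + h) p ∂μ) - (∫ p, fE x ψ p ∂μ)
      + ∑ i : Fin N, (μ (Lag x ψ i)).toReal * h i := by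
  have hint1 : Integrable (fE x (ψ + h)) μ := fE_integrable μ hsupp x _
  have hint2 : Integrable (fE x ψ) μ := fE_integrable μ hsupp x _
  have hind : ∀ i : Fin N, Integrable ((Lag x ψ i).indicator (fun _ => h i)) μ :=
    fun i => (integrable_const (h i)).indicator (Lag_meas x ψ i)
  have : ∫ p, Rfun x ψ h p ∂μ = (∫ p, (fE x (ψ + h) p - fE x ψ p) ∂μ)
      + ∫ p, (∑ i : Fin N, (Lag x ψ i).indicator (fun _ => h i) p) ∂μ := by
    have h0 := integral_add (hint1.sub hint2)
      (integrable_finset_sum (μ := μ)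
        (f := fun i p => (Lag x ψ i).indicator (fun _ => h i) p) Finset.univ fun i _ => hind i)
    simp only [Pi.sub_apply] at h0
    exact h0
  rw [this, integral_sub hint1 hint2, integral_finset_sum _ fun i _ => hind i]
  congr 1
  refine Finset.sum_congr rfl fun i _ => ?_
  rw [integral_indicator_const _ (Lag_meas x ψ i), smul_eq_mul]; rfl

end helpers4

/-- the Kantorovich functional is (Fréchet) differentiable at every
`ψ`, with derivative `h ↦ Σ_i (ν_i − μ(Lag_i^ψ)) h_i`. -/
theorem kantorovich_hasFDerivAt {d N : ℕ} (hN : 1 ≤ N)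
    (μ : Measure (EuclideanSpace ℝ (Fin d))) [IsFiniteMeasure μ]
    (hsupp : ∃ K : Set (EuclideanSpace ℝ (Fin d)), IsCompact K ∧ μ Kᶜ = 0)
    (hac : μ ≪ volume)
    (x : Fin N → EuclideanSpace ℝ (Fin d)) (hx : Function.Injective x)
    (ν : Fin N → ℝ) (ψ : Fin N → ℝ) :
    HasFDerivAt (Kfun μ x ν)
      (∑ i : Fin N, (ν i - (μ (Lag x ψ i)).toReal) •
        (ContinuousLinearMap.proj i : (Fin N → ℝ) →L[ℝ] ℝ)) ψ := by
  have hNe : Nonempty (Fin N) := ⟨⟨0, hN⟩⟩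
  rw [hasFDerivAt_iff_isLittleO_nhds_zero]
  have hL : ∀ h : Fin N → ℝ,
      (∑ i : Fin N, (ν i - (μ (Lag x ψ i)).toReal) •
        (ContinuousLinearMap.proj i : (Fin N → ℝ) →L[ℝ] ℝ)) h
      = ∑ i : Fin N, (ν i - (μ (Lag x ψ i)).toReal) * h i := by
    intro h
    simp [ContinuousLinearMap.sum_apply, ContinuousLinearMap.smul_apply,
      ContinuousLinearMap.proj_apply, smul_eq_mul]
  have hrepr : ∀ h : Fin N → ℝ,
      Kfun μ x ν (ψ + h) - Kfun μ x ν ψ -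
        (∑ i : Fin N, (ν i - (μ (Lag x ψ i)).toReal) •
          (ContinuousLinearMap.proj i : (Fin N → ℝ) →L[ℝ] ℝ)) h
      = ∫ p, Rfun x ψ h p ∂μ := by
    intro h
    have hK1 : Kfun μ x ν (ψ + h)
        = (∫ p, fE x (ψ + h) p ∂μ) + ∑ i : Fin N, (ψ i + h i) * ν i := rfl
    have hK2 : Kfun μ x ν ψ = (∫ p, fE x ψ p ∂μ) + ∑ i : Fin N, ψ i * ν i := rfl
    have hsum : ∑ i : Fin N, (ψ i + h i) * ν i - ∑ i : Fin N, ψ i * ν i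
        - ∑ i : Fin N, (ν i - (μ (Lag x ψ i)).toReal) * h i
        = ∑ i : Fin N, (μ (Lag x ψ i)).toReal * h i := by
      rw [← Finset.sum_sub_distrib, ← Finset.sum_sub_distrib]
      exact Finset.sum_congr rfl fun i _ => by ring
    rw [hK1, hK2, hL, Rfun_integral μ hsupp x ψ h]
    linarith [hsum]
  simp only [hrepr]
  rw [← isLittleO_norm_right]
  refine (isLittleO_iff_tendsto fun h hh => ?_).mpr ?_
  · -- ‖h‖ = 0 → ∫ Rfun = 0
    have : h = 0 := by rwa [norm_eq_zero] at hh
    subst this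
    have : ∀ p, Rfun x ψ (0 : Fin N → ℝ) p = 0 := by
      intro p
      simp [Rfun, add_zero]
    simp [this]
  · rw [tendsto_iff_seq_tendsto]
    intro u hu
    have hBnull := Bad_null μ hac x hx ψ
    have hae : ∀ᵐ p ∂μ, p ∉ Bad x ψ := by
      rw [ae_iff]; simpa [Set.setOf_mem_eq] using hBnull
    have hdiv : ∀ n, (∫ p, Rfun x ψ (u n) p ∂μ) / ‖u n‖
        = ∫ p, ‖u n‖⁻¹ * Rfun x ψ (u n) p ∂μ := by
      intro n
      rw [integral_const_mul, div_eq_inv_mul]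
    simp only [Function.comp_def, hdiv]
    have hDCT := tendsto_integral_of_dominated_convergence (μ := μ)
      (F := fun n p => ‖u n‖⁻¹ * Rfun x ψ (u n) p) (f := fun _ => (0:ℝ))
      (bound := fun _ => (2:ℝ))
      (fun n => (Rfun_meas μ x ψ (u n)).const_mul _)
      (integrable_const 2)
      ?_ ?_
    · simpa using hDCT
    · -- bound
      intro n
      filter_upwards [hae] with p hp
      have h1 := Rfun_abs_le hp (u n)
      rcases eq_or_ne ‖u n‖ 0 with h0 | h0
      · have : Rfun x ψ (u n) p = 0 := by
          have := abs_nonneg (Rfun x ψ (u n) p)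
          rw [h0] at h1
          have : |Rfun x ψ (u n) p| = 0 := le_antisymm (by linarith) (abs_nonneg _)
          exact abs_eq_zero.mp this
        simp [this]
      · have hpos : 0 < ‖u n‖ := (norm_nonneg _).lt_of_ne (Ne.symm h0)
        rw [Real.norm_eq_abs, abs_mul, abs_inv, abs_norm]
        rw [inv_mul_le_iff₀ hpos]
        calc |Rfun x ψ (u n) p| ≤ 2 * ‖u n‖ := h1
          _ ≤ ‖u n‖ * 2 := by ring_nf; exact le_refl _
    · -- a.e. convergence
      filter_upwards [hae] with p hp
      have hev2 : ∀ᶠ n in atTop, Rfun x ψ (u n) p = 0 :=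
        hu.eventually (Rfun_eventually hp)
      refine Tendsto.congr' ?_ tendsto_const_nhds
      filter_upwards [hev2] with n hn
      rw [hn, mul_zero]
end

section
/- Let μ be a finite, compactly supported measure on ℝ^d that is absolutely continuous with respect to Lebesgue measure, let x_1, …, x_N ∈ ℝ^d (N ≥ 1) be pairwise distinct, and let ν_1, …, ν_N be strictly positive reals with Σ_{i=1}^N ν_i = μ(ℝ^d). Then the Kantorovich functional K admits at least one global maximizer: there exists ψ* ∈ ℝ^N such that K(ψ) ≤ K(ψ*) for all ψ ∈ ℝ^N. -/
open MeasureTheory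

namespace KantAux

variable {d N : ℕ} [Nonempty (Fin N)]
set_option linter.unusedSectionVars false

/-- The integrand. -/
noncomputable def g (x : Fin N → EuclideanSpace ℝ (Fin d)) (ψ : Fin N → ℝ)
    (p : EuclideanSpace ℝ (Fin d)) : ℝ := ⨅ i : Fin N, (‖p - x i‖ ^ 2 - ψ i)

lemma bdd (x : Fin N → EuclideanSpace ℝ (Fin d)) (ψ : Fin N → ℝ)
    (p : EuclideanSpace ℝ (Fin d)) :
    BddBelow (Set.range fun i : Fin N => ‖p - x i‖ ^ 2 - ψ i) :=
  (Set.finite_range _).bddBelow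

lemma g_le (x : Fin N → EuclideanSpace ℝ (Fin d)) (ψ : Fin N → ℝ)
    (p : EuclideanSpace ℝ (Fin d)) (i : Fin N) :
    g x ψ p ≤ ‖p - x i‖ ^ 2 - ψ i := ciInf_le (bdd x ψ p) i

lemma le_g (x : Fin N → EuclideanSpace ℝ (Fin d)) (ψ : Fin N → ℝ)
    (p : EuclideanSpace ℝ (Fin d)) {a : ℝ} (h : ∀ i, a ≤ ‖p - x i‖ ^ 2 - ψ i) :
    a ≤ g x ψ p := le_ciInf h

lemma g_lip (x : Fin N → EuclideanSpace ℝ (Fin d)) (ψ ψ' : Fin N → ℝ)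
    (p : EuclideanSpace ℝ (Fin d)) :
    g x ψ p ≤ g x ψ' p + dist ψ ψ' := by
  rw [← sub_le_iff_le_add]
  apply le_g
  intro i
  have h1 : g x ψ p ≤ ‖p - x i‖ ^ 2 - ψ i := g_le x ψ p i
  have h2 : dist (ψ i) (ψ' i) ≤ dist ψ ψ' := dist_le_pi_dist ψ ψ' i
  rw [Real.dist_eq] at h2
  have := abs_le.1 h2
  linarith [this.1, this.2]

lemma g_abs_lip (x : Fin N → EuclideanSpace ℝ (Fin d)) (ψ ψ' : Fin N → ℝ)
    (p : EuclideanSpace ℝ (Fin d)) :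
    |g x ψ p - g x ψ' p| ≤ dist ψ ψ' := by
  rw [abs_sub_le_iff]
  constructor
  · linarith [g_lip x ψ ψ' p]
  · have := g_lip x ψ' ψ p
    rw [dist_comm] at this
    linarith

lemma g_meas (x : Fin N → EuclideanSpace ℝ (Fin d)) (ψ : Fin N → ℝ) :
    Measurable (g x ψ) := by
  apply Measurable.iInf
  intro i
  exact (((continuous_id.sub continuous_const).norm.pow 2).sub continuous_const).measurable

lemma g_shift (x : Fin N → EuclideanSpace ℝ (Fin d)) (ψ : Fin N → ℝ) (c : ℝ)
    (p : EuclideanSpace ℝ (Fin d)) :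
    g x (fun i => ψ i + c) p = g x ψ p - c := by
  apply le_antisymm
  · rw [le_sub_iff_add_le]
    apply le_g
    intro i
    have := g_le x (fun i => ψ i + c) p i
    linarith
  · apply le_g
    intro i
    show g x ψ p - c ≤ ‖p - x i‖ ^ 2 - (ψ i + c)
    have := g_le x ψ p i
    linarith

/-- bound for integrability -/
lemma g_bound (x : Fin N → EuclideanSpace ℝ (Fin d)) (ψ : Fin N → ℝ)
    {K : Set (EuclideanSpace ℝ (Fin d))} {M : ℝ} (hM : 0 ≤ M)
    (hMb : ∀ p ∈ K, ∀ i, ‖p - x i‖ ^ 2 ≤ M) {p : EuclideanSpace ℝ (Fin d)} (hp : p ∈ K) :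
    ‖g x ψ p‖ ≤ M + Finset.univ.sup' Finset.univ_nonempty (fun i => |ψ i|) := by
  set A := Finset.univ.sup' Finset.univ_nonempty (fun i => |ψ i|) with hA
  have hAi : ∀ i, |ψ i| ≤ A := fun i => by
    rw [hA]; exact Finset.le_sup' (fun i => |ψ i|) (Finset.mem_univ i)
  have hA0 : 0 ≤ A := le_trans (abs_nonneg _) (hAi (Classical.arbitrary _))
  rw [Real.norm_eq_abs, abs_le]
  constructor
  · apply le_g
    intro i
    have h1 := hAi i
    have h2 : (0:ℝ) ≤ ‖p - x i‖ ^ 2 := by positivity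
    have := abs_le.1 h1
    linarith [this.2]
  · have i0 : Fin N := Classical.arbitrary _
    have h1 := g_le x ψ p i0
    have h2 := hMb p hp i0
    have := abs_le.1 (hAi i0)
    linarith [this.1]

lemma g_int (μ : Measure (EuclideanSpace ℝ (Fin d))) [IsFiniteMeasure μ]
    (x : Fin N → EuclideanSpace ℝ (Fin d)) (ψ : Fin N → ℝ)
    {K : Set (EuclideanSpace ℝ (Fin d))} (hK0 : μ Kᶜ = 0) {M : ℝ} (hM : 0 ≤ M)
    (hMb : ∀ p ∈ K, ∀ i, ‖p - x i‖ ^ 2 ≤ M) :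
    Integrable (g x ψ) μ := by
  have hae : ∀ᵐ p ∂μ, p ∈ K := by
    rw [ae_iff]
    exact hK0
  refine Integrable.mono' (integrable_const (M + Finset.univ.sup' Finset.univ_nonempty fun i => |ψ i|)) (g_meas x ψ).aestronglyMeasurable ?_
  filter_upwards [hae] with p hp
  exact g_bound x ψ hM hMb hp

end KantAux

namespace KantAux2
open KantAux

variable {d N : ℕ} [Nonempty (Fin N)]
set_option linter.unusedSectionVars false

lemma Kfun_eq (μ : Measure (EuclideanSpace ℝ (Fin d)))
    (x : Fin N → EuclideanSpace ℝ (Fin d)) (ν ψ : Fin N → ℝ) :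
    Kfun μ x ν ψ = (∫ p, g x ψ p ∂μ) + ∑ i : Fin N, ψ i * ν i := rfl

lemma Kfun_shift (μ : Measure (EuclideanSpace ℝ (Fin d))) [IsFiniteMeasure μ]
    (x : Fin N → EuclideanSpace ℝ (Fin d)) (ν : Fin N → ℝ)
    {K : Set (EuclideanSpace ℝ (Fin d))} (hK0 : μ Kᶜ = 0) {M : ℝ} (hM : 0 ≤ M)
    (hMb : ∀ p ∈ K, ∀ i, ‖p - x i‖ ^ 2 ≤ M)
    (hbal : ∑ i : Fin N, ν i = (μ Set.univ).toReal) (ψ : Fin N → ℝ) (c : ℝ) :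
    Kfun μ x ν (fun i => ψ i + c) = Kfun μ x ν ψ := by
  have hint := g_int μ x ψ hK0 hM hMb
  rw [Kfun_eq, Kfun_eq]
  have h1 : (∫ p, g x (fun i => ψ i + c) p ∂μ) = ∫ p, (g x ψ p - c) ∂μ := by
    congr 1; funext p; exact g_shift x ψ c p
  rw [h1, integral_sub hint (integrable_const c), integral_const, smul_eq_mul, measureReal_def]
  have h2 : ∑ i : Fin N, (fun i => ψ i + c) i * ν i
      = (∑ i : Fin N, ψ i * ν i) + (μ Set.univ).toReal * c := by
    simp only [add_mul, Finset.sum_add_distrib]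
    rw [← Finset.mul_sum, hbal]
    ring
  rw [h2]
  ring

lemma coercive (μ : Measure (EuclideanSpace ℝ (Fin d))) [IsFiniteMeasure μ]
    (x : Fin N → EuclideanSpace ℝ (Fin d)) (ν : Fin N → ℝ)
    {K : Set (EuclideanSpace ℝ (Fin d))} (hK0 : μ Kᶜ = 0) {M : ℝ} (hM : 0 ≤ M)
    (hMb : ∀ p ∈ K, ∀ i, ‖p - x i‖ ^ 2 ≤ M) (hν : ∀ i, 0 ≤ ν i)
    (hbal : ∑ i : Fin N, ν i = (μ Set.univ).toReal)
    (ψ : Fin N → ℝ) (hψ0 : ∀ i, 0 ≤ ψ i) (j : Fin N) (hj : ψ j = 0)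
    (k : Fin N) (hk : ∀ i, ψ i ≤ ψ k) :
    Kfun μ x ν ψ ≤ (μ Set.univ).toReal * M - ψ k * ν j := by
  set m := (μ Set.univ).toReal with hm
  have hm0 : 0 ≤ m := ENNReal.toReal_nonneg
  have hint := g_int μ x ψ hK0 hM hMb
  have hae : ∀ᵐ p ∂μ, p ∈ K := by rw [ae_iff]; exact hK0
  have h1 : (∫ p, g x ψ p ∂μ) ≤ m * (M - ψ k) := by
    have hmono := integral_mono_ae hint (integrable_const (M - ψ k)) ?_
    · rwa [integral_const, smul_eq_mul] at hmono
    · filter_upwards [hae] with p hp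
      exact le_trans (g_le x ψ p k) (by linarith [hMb p hp k])
  have h2 : ∑ i : Fin N, ψ i * ν i ≤ ψ k * (m - ν j) := by
    have e1 : ∑ i : Fin N, ψ i * ν i = ∑ i ∈ Finset.univ.erase j, ψ i * ν i := by
      rw [← Finset.add_sum_erase _ _ (Finset.mem_univ j), hj]; ring
    rw [e1]
    calc ∑ i ∈ Finset.univ.erase j, ψ i * ν i
        ≤ ∑ i ∈ Finset.univ.erase j, ψ k * ν i :=
          Finset.sum_le_sum (fun i _ => mul_le_mul_of_nonneg_right (hk i) (hν i))
      _ = ψ k * ∑ i ∈ Finset.univ.erase j, ν i := by rw [Finset.mul_sum]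
      _ = ψ k * (m - ν j) := by
          rw [Finset.sum_erase_eq_sub (Finset.mem_univ j), hbal]
  rw [Kfun_eq]
  nlinarith [h1, h2]

lemma Kfun_cont (μ : Measure (EuclideanSpace ℝ (Fin d))) [IsFiniteMeasure μ]
    (x : Fin N → EuclideanSpace ℝ (Fin d)) (ν : Fin N → ℝ)
    {K : Set (EuclideanSpace ℝ (Fin d))} (hK0 : μ Kᶜ = 0) {M : ℝ} (hM : 0 ≤ M)
    (hMb : ∀ p ∈ K, ∀ i, ‖p - x i‖ ^ 2 ≤ M) :
    Continuous (fun ψ : Fin N → ℝ => Kfun μ x ν ψ) := by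
  set m := (μ Set.univ).toReal with hm
  have hm0 : 0 ≤ m := ENNReal.toReal_nonneg
  have h1 : Continuous (fun ψ : Fin N → ℝ => ∫ p, g x ψ p ∂μ) := by
    refine LipschitzWith.continuous (LipschitzWith.of_dist_le_mul (K := m.toNNReal) ?_)
    intro ψ ψ'
    have hi := g_int μ x ψ hK0 hM hMb
    have hi' := g_int μ x ψ' hK0 hM hMb
    rw [Real.dist_eq, Real.coe_toNNReal _ hm0]
    calc |(∫ p, g x ψ p ∂μ) - ∫ p, g x ψ' p ∂μ|
        = |∫ p, (g x ψ p - g x ψ' p) ∂μ| := by rw [integral_sub hi hi']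
      _ ≤ ∫ p, ‖g x ψ p - g x ψ' p‖ ∂μ := by
          rw [← Real.norm_eq_abs]
          exact norm_integral_le_integral_norm _
      _ ≤ ∫ _, dist ψ ψ' ∂μ := by
          refine integral_mono_ae ((hi.sub hi').norm) (integrable_const _)
            (Filter.Eventually.of_forall fun p => ?_)
          show ‖g x ψ p - g x ψ' p‖ ≤ dist ψ ψ'
          rw [Real.norm_eq_abs]
          exact g_abs_lip x ψ ψ' p
      _ = m * dist ψ ψ' := by rw [integral_const, smul_eq_mul, measureReal_def]
  have h2 : Continuous fun ψ : Fin N → ℝ => ∑ i : Fin N, ψ i * ν i :=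
    continuous_finset_sum _ (fun i _ => (continuous_apply i).mul continuous_const)
  exact h1.add h2

end KantAux2

/-- under the mass balance condition, the Kantorovich functional
admits a global maximizer. -/
theorem kantorovich_exists_maximizer {d N : ℕ} (hN : 1 ≤ N)
    (μ : Measure (EuclideanSpace ℝ (Fin d))) [IsFiniteMeasure μ]
    (hsupp : ∃ K : Set (EuclideanSpace ℝ (Fin d)), IsCompact K ∧ μ Kᶜ = 0)
    (hac : μ ≪ volume)
    (x : Fin N → EuclideanSpace ℝ (Fin d)) (hx : Function.Injective x)
    (ν : Fin N → ℝ) (hν : ∀ i, 0 < ν i)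
    (hbal : ∑ i : Fin N, ν i = (μ Set.univ).toReal) :
    ∃ ψstar : Fin N → ℝ, ∀ ψ : Fin N → ℝ, Kfun μ x ν ψ ≤ Kfun μ x ν ψstar := by
  haveI : Nonempty (Fin N) := ⟨⟨0, hN⟩⟩
  classical
  obtain ⟨K, hKc, hK0⟩ := hsupp
  obtain ⟨R, hR⟩ := hKc.isBounded.subset_closedBall 0
  set X := Finset.univ.sup' Finset.univ_nonempty (fun i => ‖x i‖) with hX
  set M := (max R 0 + max X 0) ^ 2 with hMdef
  have hM : 0 ≤ M := by positivity
  have hMb : ∀ p ∈ K, ∀ i, ‖p - x i‖ ^ 2 ≤ M := by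
    intro p hp i
    have h1 : ‖p‖ ≤ R := by simpa using hR hp
    have h2 : ‖x i‖ ≤ X := by
      rw [hX]; exact Finset.le_sup' (fun i => ‖x i‖) (Finset.mem_univ i)
    have h3 : ‖p - x i‖ ≤ max R 0 + max X 0 := by
      calc ‖p - x i‖ ≤ ‖p‖ + ‖x i‖ := norm_sub_le _ _
        _ ≤ max R 0 + max X 0 :=
          add_le_add (le_trans h1 (le_max_left _ _)) (le_trans h2 (le_max_left _ _))
    calc ‖p - x i‖ ^ 2 ≤ (max R 0 + max X 0) ^ 2 := by
          have := norm_nonneg (p - x i)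
          nlinarith
      _ = M := rfl
  set m := (μ Set.univ).toReal with hm
  have hm0 : 0 ≤ m := ENNReal.toReal_nonneg
  set νmin := Finset.univ.inf' Finset.univ_nonempty ν with hνmin
  have hνminpos : 0 < νmin := by
    rw [hνmin, Finset.lt_inf'_iff]
    exact fun i _ => hν i
  have hνi : ∀ i, νmin ≤ ν i := fun i => Finset.inf'_le ν (Finset.mem_univ i)
  set R0 := max ((m * M - Kfun μ x ν 0) / νmin) 0 with hR0def
  have hR00 : (0:ℝ) ≤ R0 := le_max_right _ _
  set B := Set.Icc (0 : Fin N → ℝ) (fun _ => R0) with hB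
  have h0B : (0 : Fin N → ℝ) ∈ B := by
    constructor <;> intro i <;> simpa using hR00
  obtain ⟨ψs, hψsB, hmax⟩ := (isCompact_Icc (a := (0 : Fin N → ℝ)) (b := fun _ => R0)).exists_isMaxOn
    ⟨0, h0B⟩ (KantAux2.Kfun_cont μ x ν hK0 hM hMb).continuousOn
  refine ⟨ψs, fun ψ => ?_⟩
  set c := Finset.univ.inf' Finset.univ_nonempty ψ with hc
  set ψ' : Fin N → ℝ := fun i => ψ i - c with hψ'
  have hshift : Kfun μ x ν ψ = Kfun μ x ν ψ' := by
    have h := KantAux2.Kfun_shift μ x ν hK0 hM hMb hbal ψ' c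
    have he : (fun i => ψ' i + c) = ψ := by funext i; simp [hψ']
    rw [he] at h
    exact h
  have hψ'0 : ∀ i, 0 ≤ ψ' i := fun i =>
    sub_nonneg.2 (Finset.inf'_le ψ (Finset.mem_univ i))
  obtain ⟨j, -, hj⟩ := Finset.exists_mem_eq_inf' Finset.univ_nonempty ψ
  have hj0 : ψ' j = 0 := by simp [hψ', hc, ← hj]
  obtain ⟨k, -, hk⟩ := Finset.exists_max_image Finset.univ ψ' Finset.univ_nonempty
  have hk' : ∀ i, ψ' i ≤ ψ' k := fun i => hk i (Finset.mem_univ i)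
  rw [hshift]
  by_cases hcase : ψ' k ≤ R0
  · exact hmax ⟨fun i => hψ'0 i, fun i => le_trans (hk' i) hcase⟩
  · push_neg at hcase
    have hco := KantAux2.coercive μ x ν hK0 hM hMb (fun i => (hν i).le) hbal
      ψ' hψ'0 j hj0 k hk'
    have hmul : ψ' k * νmin ≤ ψ' k * ν j :=
      mul_le_mul_of_nonneg_left (hνi j) (hψ'0 k)
    have hdiv : (m * M - Kfun μ x ν 0) / νmin < ψ' k :=
      lt_of_le_of_lt (le_max_left _ _) hcase
    rw [div_lt_iff₀ hνminpos] at hdiv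
    have hlt : Kfun μ x ν ψ' < Kfun μ x ν 0 := by
      rw [← hm] at hco
      nlinarith
    exact le_trans hlt.le (hmax h0B)
end

section
/- Let μ be a finite measure on ℝ^d that is absolutely continuous with respect to Lebesgue measure and let x_1, …, x_N ∈ ℝ^d (N ≥ 1) be pairwise distinct. Then for each index i, the map ψ ↦ μ(Lag_i^ψ) assigning to a weight vector the μ-mass of the i-th Laguerre cell is continuous on ℝ^N. -/
open MeasureTheory

open Filter Topology Set
open scoped RealInnerProductSpace

lemma hyperplane_meas_zero {d : ℕ} (v : EuclideanSpace ℝ (Fin d)) (hv : v ≠ 0) (c : ℝ) :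
    volume {p : EuclideanSpace ℝ (Fin d) | ⟪p, v⟫ = c} = 0 := by
  set f : EuclideanSpace ℝ (Fin d) →ₗ[ℝ] ℝ := (innerSL ℝ v).toLinearMap with hf
  set p₀ : EuclideanSpace ℝ (Fin d) := (c / ‖v‖ ^ 2) • v with hp₀
  have hfp₀ : f p₀ = c := by
    have hvv : ⟪v, v⟫ = ‖v‖ ^ 2 := real_inner_self_eq_norm_sq v
    have : f p₀ = (c / ‖v‖ ^ 2) * ⟪v, v⟫ := by
      simp [hf, hp₀, inner_smul_right]
    rw [this, hvv, div_mul_cancel₀ _ (pow_ne_zero _ (norm_ne_zero_iff.mpr hv))]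
  have hset : {p : EuclideanSpace ℝ (Fin d) | ⟪p, v⟫ = c}
      = ↑(AffineSubspace.mk' p₀ (LinearMap.ker f)) := by
    ext p
    simp only [Set.mem_setOf_eq, SetLike.mem_coe, AffineSubspace.mem_mk',
      LinearMap.mem_ker, vsub_eq_sub, map_sub, hfp₀, sub_eq_zero]
    rw [real_inner_comm]
    simp [hf]
  rw [hset]
  refine Measure.addHaar_affineSubspace volume _ ?_
  intro htop
  have hdir : (AffineSubspace.mk' p₀ (LinearMap.ker f)).direction = LinearMap.ker f :=
    AffineSubspace.direction_mk' _ _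
  rw [htop, AffineSubspace.direction_top] at hdir
  have hvker : v ∈ LinearMap.ker f := by rw [← hdir]; trivial
  have hzero : ⟪v, v⟫ = 0 := by
    simpa only [LinearMap.mem_ker, hf, ContinuousLinearMap.coe_coe, innerSL_apply_apply] using hvker
  exact hv (inner_self_eq_zero.mp hzero)

lemma isClosed_Lag {d N : ℕ} (x : Fin N → EuclideanSpace ℝ (Fin d)) (ψ : Fin N → ℝ)
    (i : Fin N) : IsClosed (Lag x ψ i) := by
  have h : Lag x ψ i =
      ⋂ j, {p : EuclideanSpace ℝ (Fin d) |
        j ≠ i → ‖p - x i‖ ^ 2 - ψ i ≤ ‖p - x j‖ ^ 2 - ψ j} := by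
    ext p; simp [Lag, Set.mem_iInter]
  rw [h]
  refine isClosed_iInter fun j => ?_
  by_cases hj : j = i
  · simp [hj]
  · have : {p : EuclideanSpace ℝ (Fin d) |
        j ≠ i → ‖p - x i‖ ^ 2 - ψ i ≤ ‖p - x j‖ ^ 2 - ψ j}
        = {p : EuclideanSpace ℝ (Fin d) |
        ‖p - x i‖ ^ 2 - ψ i ≤ ‖p - x j‖ ^ 2 - ψ j} := by
      ext p; simp [hj]
    rw [this]
    exact isClosed_le (by fun_prop) (by fun_prop)

/-- for a finite measure absolutely continuous with respect to
Lebesgue measure, the mass of the `i`-th Laguerre cell depends continuously on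
the weight vector. -/
theorem laguerre_mass_continuous {d N : ℕ} (hN : 1 ≤ N)
    (μ : Measure (EuclideanSpace ℝ (Fin d))) [IsFiniteMeasure μ]
    (hac : μ ≪ volume)
    (x : Fin N → EuclideanSpace ℝ (Fin d)) (hx : Function.Injective x)
    (i : Fin N) :
    Continuous fun ψ : Fin N → ℝ => μ (Lag x ψ i) := by
  rw [continuous_iff_continuousAt]
  intro ψ
  -- the exceptional set, a finite union of hyperplanes
  set E : Set (EuclideanSpace ℝ (Fin d)) :=
    ⋃ j : Fin N, {p : EuclideanSpace ℝ (Fin d) |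
      j ≠ i ∧ ‖p - x i‖ ^ 2 - ψ i = ‖p - x j‖ ^ 2 - ψ j} with hE
  have hEvol : volume E = 0 := by
    rw [hE, measure_iUnion_null_iff]
    intro j
    by_cases hj : j = i
    · simp [hj]
    · have hset : {p : EuclideanSpace ℝ (Fin d) |
          j ≠ i ∧ ‖p - x i‖ ^ 2 - ψ i = ‖p - x j‖ ^ 2 - ψ j}
          = {p : EuclideanSpace ℝ (Fin d) |
            ⟪p, (2:ℝ) • (x j - x i)⟫ = ψ i - ψ j - ‖x i‖ ^ 2 + ‖x j‖ ^ 2} := by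
        ext p
        simp only [Set.mem_setOf_eq, hj, ne_eq, not_false_eq_true, true_and]
        rw [norm_sub_sq_real p (x i), norm_sub_sq_real p (x j),
          inner_smul_right, inner_sub_right]
        constructor <;> intro h <;> linarith
      rw [hset]
      refine hyperplane_meas_zero _ ?_ _
      have : x j - x i ≠ 0 := sub_ne_zero.mpr (fun h => hj (hx h))
      simpa [smul_eq_zero] using this
  have hEμ : μ E = 0 := hac hEvol
  -- rewrite measures as lintegrals of indicators
  have hrw : ∀ ψ' : Fin N → ℝ, μ (Lag x ψ' i)
      = ∫⁻ p, (Lag x ψ' i).indicator (fun _ => (1 : ENNReal)) p ∂μ := by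
    intro ψ'
    rw [lintegral_indicator (isClosed_Lag x ψ' i).measurableSet]
    simp
  unfold ContinuousAt
  simp only [hrw]
  refine tendsto_lintegral_filter_of_dominated_convergence (fun _ => (1 : ENNReal))
    ?_ ?_ ?_ ?_
  · exact Filter.Eventually.of_forall fun ψ' =>
      measurable_one.indicator (isClosed_Lag x ψ' i).measurableSet
  · exact Filter.Eventually.of_forall fun ψ' =>
      ae_of_all _ fun p => Set.indicator_le (fun _ _ => le_refl _) p
  · simp [lintegral_one, measure_lt_top]
  · -- a.e. pointwise convergence
    filter_upwards [measure_eq_zero_iff_ae_notMem.mp hEμ] with p hp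
    by_cases hpl : p ∈ Lag x ψ i
    · -- strict inequalities, eventually in the cell
      have hstrict : ∀ j, j ≠ i → ‖p - x i‖ ^ 2 - ψ i < ‖p - x j‖ ^ 2 - ψ j := by
        intro j hj
        rcases lt_or_eq_of_le (hpl j hj) with h | h
        · exact h
        · refine absurd (?_ : p ∈ E) hp
          rw [hE]
          exact Set.mem_iUnion.mpr ⟨j, ⟨hj, h⟩⟩
      have hev : ∀ᶠ ψ' : Fin N → ℝ in 𝓝 ψ, p ∈ Lag x ψ' i := by
        have h1 : ∀ᶠ ψ' : Fin N → ℝ in 𝓝 ψ,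
            ∀ j, j ≠ i → ‖p - x i‖ ^ 2 - ψ' i < ‖p - x j‖ ^ 2 - ψ' j := by
          rw [eventually_all]
          intro j
          by_cases hj : j = i
          · exact Filter.Eventually.of_forall fun ψ' h => absurd hj h
          · have hopen : IsOpen {ψ' : Fin N → ℝ |
                ‖p - x i‖ ^ 2 - ψ' i < ‖p - x j‖ ^ 2 - ψ' j} :=
              isOpen_lt (by fun_prop) (by fun_prop)
            exact (hopen.eventually_mem (hstrict j hj)).mono fun ψ' h _ => h
        exact h1.mono fun ψ' h j hj => le_of_lt (h j hj)
      have heq : ∀ᶠ ψ' : Fin N → ℝ in 𝓝 ψ,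
          (Lag x ψ' i).indicator (fun _ => (1 : ENNReal)) p = 1 := by
        filter_upwards [hev] with ψ' h using Set.indicator_of_mem h _
      rw [Set.indicator_of_mem hpl]
      exact Tendsto.congr' (by filter_upwards [heq] with ψ' h using h.symm)
        tendsto_const_nhds
    · -- a strict reverse inequality, eventually outside the cell
      obtain ⟨j, hj, hgt⟩ : ∃ j, j ≠ i ∧ ‖p - x j‖ ^ 2 - ψ j < ‖p - x i‖ ^ 2 - ψ i := by
        simp only [Lag, Set.mem_setOf_eq, not_forall] at hpl
        obtain ⟨j, hj, h⟩ := hpl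
        exact ⟨j, hj, lt_of_not_ge h⟩
      have hev : ∀ᶠ ψ' : Fin N → ℝ in 𝓝 ψ, p ∉ Lag x ψ' i := by
        have hopen : IsOpen {ψ' : Fin N → ℝ |
            ‖p - x j‖ ^ 2 - ψ' j < ‖p - x i‖ ^ 2 - ψ' i} :=
          isOpen_lt (by fun_prop) (by fun_prop)
        exact (hopen.eventually_mem hgt).mono fun ψ' h hmem =>
          absurd (hmem j hj) (not_le.mpr h)
      have heq : ∀ᶠ ψ' : Fin N → ℝ in 𝓝 ψ,
          (Lag x ψ' i).indicator (fun _ => (1 : ENNReal)) p = 0 := by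
        filter_upwards [hev] with ψ' h using Set.indicator_of_notMem h _
      rw [Set.indicator_of_notMem hpl]
      exact Tendsto.congr' (by filter_upwards [heq] with ψ' h using h.symm)
        tendsto_const_nhds
end
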